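/- Let G be a finite group acting on finite sets S and T, let A be a G-covariant stochastic map from distributions on S to distributions on T (i.e., A(P^g) = (A P)^g for all g ∈ G and all distributions P). Then the reference information is non-increasing: I_G(A P) ≤ I_G(P) for every distribution P on S. -/

import Mathlib

open Finset

/-- Shannon entropy (base 2). -/
noncomputable def entH {S : Type*} [Fintype S] (P : S → ℝ) : ℝ :=
  -∑ s, P s * Real.logb 2 (P s)

/-- Reference information of a distribution P with respect to a finite group
action: I_G(P) = H((1/|G|)∑_g P^g) - H(P). -/
noncomputable def refInfo (G : Type*) {S : Type*} [Group G] [Fintype G]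
    [Fintype S] [MulAction G S] (P : S → ℝ) : ℝ :=
  entH (fun s => (1 / (Fintype.card G : ℝ)) * ∑ g : G, P (g⁻¹ • s)) - entH P


section Aux

variable {S : Type*} [Fintype S]

/-- Un-normalized entropy-like sum in natural log. -/
noncomputable def LL (P : S → ℝ) : ℝ := ∑ s, P s * Real.log (P s)

/-- KL-like divergence in natural log. -/
noncomputable def DD (p q : S → ℝ) : ℝ := ∑ s, p s * Real.log (p s / q s)

/-- Log-sum inequality. -/
lemma logsum (a b : S → ℝ) (ha : ∀ i, 0 ≤ a i) (hb : ∀ i, 0 ≤ b i)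
    (hab : ∀ i, b i = 0 → a i = 0) :
    (∑ i, a i) * Real.log ((∑ i, a i) / (∑ i, b i)) ≤
      ∑ i, a i * Real.log (a i / b i) := by
  classical
  set t : Finset S := univ.filter (fun i => b i ≠ 0) with ht
  have hsa : ∑ i ∈ t, a i = ∑ i, a i := by
    refine Finset.sum_subset (Finset.subset_univ t) ?_
    intro i _ hi
    simp only [ht, mem_filter, mem_univ, true_and, not_not] at hi
    exact hab i hi
  have hsb : ∑ i ∈ t, b i = ∑ i, b i := by
    refine Finset.sum_subset (Finset.subset_univ t) ?_
    intro i _ hi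
    simp only [ht, mem_filter, mem_univ, true_and, not_not] at hi
    exact hi
  have hrhs : ∑ i ∈ t, a i * Real.log (a i / b i) = ∑ i, a i * Real.log (a i / b i) := by
    refine Finset.sum_subset (Finset.subset_univ t) ?_
    intro i _ hi
    simp only [ht, mem_filter, mem_univ, true_and, not_not] at hi
    rw [hab i hi]; ring
  rw [← hsa, ← hsb, ← hrhs]
  rcases Finset.eq_empty_or_nonempty t with hte | hne
  · simp [hte]
  have hBpos : 0 < ∑ i ∈ t, b i := by
    refine Finset.sum_pos ?_ hne
    intro i hi
    simp only [ht, mem_filter, mem_univ, true_and] at hi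
    exact lt_of_le_of_ne (hb i) (Ne.symm hi)
  set B := ∑ i ∈ t, b i with hB
  set Aa := ∑ i ∈ t, a i with hAa
  have hbne : ∀ i ∈ t, b i ≠ 0 := by
    intro i hi; simp only [ht, mem_filter, mem_univ, true_and] at hi; exact hi
  have jensen := Real.convexOn_mul_log.map_sum_le (t := t)
    (w := fun i => b i / B) (p := fun i => a i / b i)
    (fun i _ => div_nonneg (hb i) hBpos.le)
    (by rw [← Finset.sum_div]; field_simp; rfl)
    (fun i _ => Set.mem_Ici.mpr (div_nonneg (ha i) (hb i)))
  have harg : ∑ i ∈ t, (b i / B) • (a i / b i) = Aa / B := by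
    rw [hAa, Finset.sum_div]
    refine Finset.sum_congr rfl ?_
    intro i hi
    have : b i ≠ 0 := hbne i hi
    field_simp
    rw [smul_eq_mul]; field_simp [hBpos.ne']
  have hrhs2 : ∑ i ∈ t, (b i / B) • ((a i / b i) * Real.log (a i / b i))
      = (∑ i ∈ t, a i * Real.log (a i / b i)) / B := by
    rw [Finset.sum_div]
    refine Finset.sum_congr rfl ?_
    intro i hi
    have : b i ≠ 0 := hbne i hi
    field_simp
    rw [smul_eq_mul]; field_simp [hBpos.ne']
  rw [harg, hrhs2] at jensen
  have := mul_le_mul_of_nonneg_left jensen hBpos.le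
  calc Aa * Real.log (Aa / B) = B * (Aa / B * Real.log (Aa / B)) := by
        field_simp
    _ ≤ B * ((∑ i ∈ t, a i * Real.log (a i / b i)) / B) := this
    _ = ∑ i ∈ t, a i * Real.log (a i / b i) := by field_simp

end Aux

section Aux2

variable {S T : Type*} [Fintype S] [Fintype T]

/-- Data processing inequality for DD. -/
lemma dpi (A : Matrix T S ℝ) (hA0 : ∀ t s, 0 ≤ A t s) (hA1 : ∀ s, ∑ t, A t s = 1)
    (p q : S → ℝ) (hp : ∀ s, 0 ≤ p s) (hq : ∀ s, 0 ≤ q s)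
    (hpq : ∀ s, q s = 0 → p s = 0) :
    DD (A.mulVec p) (A.mulVec q) ≤ DD p q := by
  classical
  have hmv : ∀ (v : S → ℝ) t, A.mulVec v t = ∑ s, A t s * v s := by
    intro v t; simp [Matrix.mulVec, dotProduct]
  have key : ∀ t, A.mulVec p t * Real.log (A.mulVec p t / A.mulVec q t)
      ≤ ∑ s, A t s * (p s * Real.log (p s / q s)) := by
    intro t
    have h1 := logsum (fun s => A t s * p s) (fun s => A t s * q s)
      (fun s => mul_nonneg (hA0 t s) (hp s))
      (fun s => mul_nonneg (hA0 t s) (hq s))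
      (by
        intro s hs
        have hs' : A t s * q s = 0 := hs
        show A t s * p s = 0
        rcases mul_eq_zero.mp hs' with h | h
        · rw [h, zero_mul]
        · rw [hpq s h, mul_zero])
    rw [hmv, hmv]
    refine h1.trans_eq (Finset.sum_congr rfl ?_)
    intro s _
    by_cases hAts : A t s = 0
    · simp [hAts]
    by_cases hps : p s = 0
    · simp [hps]
    by_cases hqs : q s = 0
    · rw [hpq s hqs] at hps; exact absurd rfl hps
    · rw [mul_div_mul_left _ _ hAts]; ring
  calc DD (A.mulVec p) (A.mulVec q)
      ≤ ∑ t, ∑ s, A t s * (p s * Real.log (p s / q s)) :=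
        Finset.sum_le_sum (fun t _ => key t)
    _ = ∑ s, (∑ t, A t s) * (p s * Real.log (p s / q s)) := by
        rw [Finset.sum_comm]
        exact Finset.sum_congr rfl (fun s _ => by rw [Finset.sum_mul])
    _ = DD p q := by
        refine Finset.sum_congr rfl ?_
        intro s _
        rw [hA1 s, one_mul]

/-- Mixture identity: average divergence to the mixture equals average LL minus
LL of the mixture. -/
lemma mixid {G : Type*} [Fintype G] (c : ℝ) (hc : 0 < c) (p : G → S → ℝ)
    (hp : ∀ g s, 0 ≤ p g s) :
    c * ∑ g, DD (p g) (fun s => c * ∑ g', p g' s)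
      = c * (∑ g, LL (p g)) - LL (fun s => c * ∑ g', p g' s) := by
  classical
  set Q : S → ℝ := fun s => c * ∑ g', p g' s with hQ
  have hterm : ∀ g s, p g s * Real.log (p g s / Q s)
      = p g s * Real.log (p g s) - p g s * Real.log (Q s) := by
    intro g s
    by_cases hps : p g s = 0
    · simp [hps]
    have hpspos : 0 < p g s := lt_of_le_of_ne (hp g s) (Ne.symm hps)
    have hQpos : 0 < Q s :=
      mul_pos hc (lt_of_lt_of_le hpspos
        (Finset.single_le_sum (fun g' _ => hp g' s) (Finset.mem_univ g)))
    rw [Real.log_div hps hQpos.ne', mul_sub]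
  have hDD : ∀ g, DD (p g) Q = LL (p g) - ∑ s, p g s * Real.log (Q s) := by
    intro g
    unfold DD LL
    rw [← Finset.sum_sub_distrib]
    exact Finset.sum_congr rfl (fun s _ => hterm g s)
  calc c * ∑ g, DD (p g) Q
      = c * (∑ g, LL (p g)) - c * ∑ g, ∑ s, p g s * Real.log (Q s) := by
        rw [← mul_sub, ← Finset.sum_sub_distrib]
        exact congrArg (c * ·) (Finset.sum_congr rfl (fun g _ => hDD g))
    _ = c * (∑ g, LL (p g)) - LL Q := by
        congr 1
        unfold LL
        rw [Finset.sum_comm, Finset.mul_sum]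
        refine Finset.sum_congr rfl ?_
        intro s _
        show c * ∑ g, p g s * Real.log (Q s) = Q s * Real.log (Q s)
        rw [← Finset.sum_mul, hQ]
        ring

end Aux2

lemma entH_eq_LL {S : Type*} [Fintype S] (P : S → ℝ) :
    entH P = -(LL P / Real.log 2) := by
  unfold entH LL
  rw [Finset.sum_div, neg_inj]
  exact Finset.sum_congr rfl fun s _ => by rw [Real.logb, mul_div_assoc]

lemma refInfo_eq_LL (G : Type*) {S : Type*} [Group G] [Fintype G]
    [Fintype S] [MulAction G S] (P : S → ℝ) :
    refInfo G P = (LL P -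
      LL (fun s => (1 / (Fintype.card G : ℝ)) * ∑ g : G, P (g⁻¹ • s))) / Real.log 2 := by
  unfold refInfo
  rw [entH_eq_LL, entH_eq_LL]
  ring

lemma sum_smul_inv {G S : Type*} [Group G] [MulAction G S] [Fintype S]
    (g : G) (F : S → ℝ) : ∑ s, F (g⁻¹ • s) = ∑ s, F s :=
  Equiv.sum_comp (MulAction.toPerm (g⁻¹ : G)) F

/-- The reference information is non-increasing under G-covariant
stochastic maps. -/
theorem reference_information_monotone
    {G S T : Type*} [Group G] [Fintype G] [Fintype S] [Fintype T]
    [MulAction G S] [MulAction G T]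
    (A : Matrix T S ℝ)
    (hA0 : ∀ t s, 0 ≤ A t s) (hA1 : ∀ s, ∑ t, A t s = 1)
    (hcov : ∀ (g : G) (P : S → ℝ), (∀ s, 0 ≤ P s) → ∑ s, P s = 1 →
      (fun t => A.mulVec P (g⁻¹ • t)) = A.mulVec (fun s => P (g⁻¹ • s)))
    (P : S → ℝ) (hP0 : ∀ s, 0 ≤ P s) (hP1 : ∑ s, P s = 1) :
    refInfo G (A.mulVec P) ≤ refInfo G P := by
  classical
  have hnpos : (0 : ℝ) < (Fintype.card G : ℝ) := by
    exact_mod_cast Fintype.card_pos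
  set c : ℝ := 1 / (Fintype.card G : ℝ) with hc
  have hcpos : 0 < c := by positivity
  set Pg : G → S → ℝ := fun g s => P (g⁻¹ • s) with hPg
  have hPg0 : ∀ g s, 0 ≤ Pg g s := fun g s => hP0 _
  set MS : S → ℝ := fun s => c * ∑ g : G, Pg g s with hMS
  set Pg' : G → T → ℝ := fun g => A.mulVec (Pg g) with hPg'
  have hPg'0 : ∀ g t, 0 ≤ Pg' g t := by
    intro g t
    exact Finset.sum_nonneg fun s _ => mul_nonneg (hA0 t s) (hPg0 g s)
  set MT : T → ℝ := fun t => c * ∑ g : G, Pg' g t with hMT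
  -- the covariant images
  have hcov' : ∀ g : G, (fun t => A.mulVec P (g⁻¹ • t)) = Pg' g := fun g =>
    hcov g P hP0 hP1
  -- rewrite both refInfos
  have hrefP : refInfo G P = (LL P - LL MS) / Real.log 2 := refInfo_eq_LL G P
  have hrefAP : refInfo G (A.mulVec P) = (LL (A.mulVec P) - LL MT) / Real.log 2 := by
    rw [refInfo_eq_LL]
    congr 2
    unfold LL
    refine Finset.sum_congr rfl fun t _ => ?_
    have key : ∀ t, c * ∑ g : G, A.mulVec P (g⁻¹ • t) = MT t := by
      intro t
      rw [hMT]
      congr 1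
      exact Finset.sum_congr rfl fun g _ => congrFun (hcov' g) t
    show (1 / (Fintype.card G : ℝ) * ∑ g : G, A.mulVec P (g⁻¹ • t)) *
        Real.log (1 / (Fintype.card G : ℝ) * ∑ g : G, A.mulVec P (g⁻¹ • t))
        = MT t * Real.log (MT t)
    rw [← hc, key t]
  -- LL-invariance under the group action
  have hLLPg : ∀ g, LL (Pg g) = LL P := fun g =>
    sum_smul_inv g (fun x => P x * Real.log (P x))
  have hLLPg' : ∀ g, LL (Pg' g) = LL (A.mulVec P) := by
    intro g
    rw [← hcov' g]
    exact sum_smul_inv g (fun x => A.mulVec P x * Real.log (A.mulVec P x))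
  -- mixture identities
  have hmixS : c * ∑ g, DD (Pg g) MS = LL P - LL MS := by
    rw [hMS, mixid c hcpos Pg hPg0]
    have : ∑ g, LL (Pg g) = (Fintype.card G : ℝ) * LL P := by
      rw [Finset.sum_congr rfl fun g _ => hLLPg g]
      simp [Finset.sum_const, nsmul_eq_mul]
    rw [this, hc]
    field_simp
  have hmixT : c * ∑ g, DD (Pg' g) MT = LL (A.mulVec P) - LL MT := by
    rw [hMT, mixid c hcpos Pg' hPg'0]
    have : ∑ g, LL (Pg' g) = (Fintype.card G : ℝ) * LL (A.mulVec P) := by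
      rw [Finset.sum_congr rfl fun g _ => hLLPg' g]
      simp [Finset.sum_const, nsmul_eq_mul]
    rw [this, hc]
    field_simp
  -- MT is the image of MS
  have hMTim : MT = A.mulVec MS := by
    funext t
    rw [hMT, hMS]
    simp only [Matrix.mulVec, dotProduct, hPg']
    calc c * ∑ g : G, ∑ s : S, A t s * Pg g s
        = ∑ g : G, ∑ s : S, c * (A t s * Pg g s) := by
          rw [Finset.mul_sum]
          exact Finset.sum_congr rfl fun g _ => Finset.mul_sum _ _ _
      _ = ∑ s : S, ∑ g : G, c * (A t s * Pg g s) := Finset.sum_comm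
      _ = ∑ s : S, A t s * (c * ∑ g : G, Pg g s) := by
          refine Finset.sum_congr rfl fun s _ => ?_
          rw [Finset.mul_sum, Finset.mul_sum]
          exact Finset.sum_congr rfl fun g _ => by ring
  -- data processing for each g
  have hdpi : ∀ g, DD (Pg' g) MT ≤ DD (Pg g) MS := by
    intro g
    rw [hMTim, hPg']
    refine dpi A hA0 hA1 (Pg g) MS (hPg0 g) ?_ ?_
    · intro s
      exact mul_nonneg hcpos.le (Finset.sum_nonneg fun g' _ => hPg0 g' s)
    · intro s hs
      by_contra hne
      have hpos : 0 < Pg g s := lt_of_le_of_ne (hPg0 g s) (Ne.symm hne)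
      have : 0 < MS s := by
        rw [hMS]
        exact mul_pos hcpos (lt_of_lt_of_le hpos
          (Finset.single_le_sum (fun g' _ => hPg0 g' s) (Finset.mem_univ g)))
      rw [hs] at this
      exact lt_irrefl 0 this
  -- assemble
  rw [hrefP, hrefAP]
  have hlog2 : 0 < Real.log 2 := Real.log_pos one_lt_two
  apply div_le_div_of_nonneg_right ?_ hlog2.le
  rw [← hmixS, ← hmixT]
  exact mul_le_mul_of_nonneg_left (Finset.sum_le_sum fun g _ => hdpi g) hcpos.le
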